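/- Let G be a group, k a natural number, G' : Fin (k+1) → Type* a family of groups, e : G ≃* G' 0 a group isomorphism, G' (Fin.last k) a trivial group (Subsingleton), and for each i : Fin k let f i : G' i.castSucc →* G' i.succ be a surjective group homomorphism whose kernel is contained in the center of G' i.castSucc. For each j : Fin (k+1), let φ j : G →* G' j be the composite of e (viewed as a homomorphism) with the maps f 0, …, f (j-1), and let N j := MonoidHom.ker (φ j). Then N 0 = ⊥, N (Fin.last k) = ⊤, N is monotone, each N j is normal in G, and for each i : Fin k the commutator subgroup ⁅N i.succ, ⊤⁆ is contained in N i.castSucc; that is, N is a central series of length k for G. -/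

import Mathlib

/-- The composite homomorphism `G' 0 →* G' j` obtained from the maps
`f i : G' i.castSucc →* G' i.succ`. -/
def towerHom {k : ℕ} {G' : Fin (k + 1) → Type*} [∀ j, Group (G' j)]
    (f : ∀ i : Fin k, G' i.castSucc →* G' i.succ) :
    ∀ (j : ℕ) (h : j < k + 1), G' 0 →* G' ⟨j, h⟩
  | 0, _ => MonoidHom.id _
  | j + 1, h =>
      (f ⟨j, Nat.lt_of_succ_lt_succ h⟩).comp (towerHom f j (Nat.lt_of_succ_lt h))

/-- Given a central tower of surjections for `G`, the kernels of the composite maps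
`φ j : G →* G' j` form a central series of length `k` for `G`. -/
theorem kernels_of_central_tower_form_central_series
    {G : Type*} [Group G] {k : ℕ} (G' : Fin (k + 1) → Type*)
    [∀ j, Group (G' j)] (e : G ≃* G' 0) [Subsingleton (G' (Fin.last k))]
    (f : ∀ i : Fin k, G' i.castSucc →* G' i.succ)
    (hsurj : ∀ i, Function.Surjective (f i))
    (hker : ∀ i, (f i).ker ≤ Subgroup.center (G' i.castSucc)) :
    let φ : ∀ j : Fin (k + 1), G →* G' j :=
      fun j => (towerHom f j.1 j.2).comp e.toMonoidHom
    let N : Fin (k + 1) → Subgroup G := fun j => MonoidHom.ker (φ j)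
    N 0 = ⊥ ∧ N (Fin.last k) = ⊤ ∧ Monotone N ∧ (∀ j, (N j).Normal) ∧
      ∀ i : Fin k, ⁅N i.succ, (⊤ : Subgroup G)⁆ ≤ N i.castSucc := by
  intro φ N
  have hstep : ∀ (i : Fin k) (x : G), φ i.succ x = f i (φ i.castSucc x) := by
    rintro ⟨i, hi⟩ x
    rfl
  have hmono : Monotone N := by
    have key : ∀ j (h : j + 1 < k + 1), N ⟨j, Nat.lt_of_succ_lt h⟩ ≤ N ⟨j + 1, h⟩ := by
      intro j h x hx
      have hx' : φ ⟨j, Nat.lt_of_succ_lt h⟩ x = 1 := hx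
      show (towerHom f (j + 1) h).comp e.toMonoidHom x = 1
      show f ⟨j, Nat.lt_of_succ_lt_succ h⟩ ((towerHom f j (Nat.lt_of_succ_lt h)) (e x)) = 1
      have : (towerHom f j (Nat.lt_of_succ_lt h)) (e x) = 1 := hx'
      rw [this, map_one]
    intro a b hab
    rcases a with ⟨a, ha⟩
    rcases b with ⟨b, hb⟩
    simp only [Fin.mk_le_mk] at hab
    induction b with
    | zero => interval_cases a; exact le_refl _
    | succ b ih =>
      rcases Nat.lt_or_ge a (b + 1) with h | h
      · exact le_trans (ih (Nat.lt_of_succ_lt hb) (Nat.lt_succ_iff.mp h)) (key b hb)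
      · have : a = b + 1 := le_antisymm hab h
        subst this
        exact le_refl _
  refine ⟨?_, ?_, hmono, fun j => MonoidHom.normal_ker _, ?_⟩
  · ext x
    simp only [N, φ, MonoidHom.mem_ker, Subgroup.mem_bot]
    constructor
    · intro h
      have : e x = 1 := h
      simpa using e.injective (by simpa using this)
    · rintro rfl; simp
  · ext x
    simp only [N, Subgroup.mem_top, iff_true, MonoidHom.mem_ker]
    exact Subsingleton.elim _ _
  · intro i
    rw [Subgroup.commutator_le]
    intro g₁ hg₁ g₂ _
    have h1 : f i (φ i.castSucc g₁) = 1 := by rw [← hstep]; exact hg₁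
    have hc : φ i.castSucc g₁ ∈ Subgroup.center (G' i.castSucc) := hker i h1
    open scoped commutatorElement in
    show φ i.castSucc ⁅g₁, g₂⁆ = 1
    rw [map_commutatorElement]
    rw [commutatorElement_eq_one_iff_mul_comm.mpr]
    exact (Subgroup.mem_center_iff.mp hc _).symm
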